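/- arXiv:1407.3230 — 2 statements merged into one kernel-verified Lean document; each statement's English description precedes it below -/
import Mathlib

section
/- Let F ⊆ 2^[n] be shattering-extremal, let α, β ∈ [n] be distinct elements such that {α, β} is not strongly shattered by F, and suppose there exist P, W, Q ∈ F with Q △ W = {α} and P △ W = {β}. Then the set V = W △ {α, β} does not belong to F, the system F ∪ {V} is shattering-extremal, and dim_VC(F ∪ {V}) ≤ max(dim_VC(F), 2). -/
open scoped symmDiff

/-- `𝓕` shatters `S`: every subset of `S` is the trace of some member of `𝓕` on `S`. -/
def Shatters {n : ℕ} (𝓕 : Finset (Finset (Fin n))) (S : Finset (Fin n)) : Prop :=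
  ∀ T ⊆ S, ∃ F ∈ 𝓕, F ∩ S = T

/-- `𝓕` strongly shatters `S`: there is `I ⊆ [n] \ S` with `{H ∪ I : H ⊆ S} ⊆ 𝓕`. -/
def StronglyShatters {n : ℕ} (𝓕 : Finset (Finset (Fin n))) (S : Finset (Fin n)) : Prop :=
  ∃ I : Finset (Fin n), I ⊆ Sᶜ ∧ ∀ H ⊆ S, H ∪ I ∈ 𝓕

open Classical in
/-- The family of subsets of `[n]` shattered by `𝓕`. -/
noncomputable def Sh {n : ℕ} (𝓕 : Finset (Finset (Fin n))) : Finset (Finset (Fin n)) :=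
  Finset.univ.filter (Shatters 𝓕)

open Classical in
/-- The family of subsets of `[n]` strongly shattered by `𝓕`. -/
noncomputable def st {n : ℕ} (𝓕 : Finset (Finset (Fin n))) : Finset (Finset (Fin n)) :=
  Finset.univ.filter (StronglyShatters 𝓕)

/-- `𝓕` is shattering-extremal if it shatters exactly `|𝓕|` sets. -/
def Extremal {n : ℕ} (𝓕 : Finset (Finset (Fin n))) : Prop :=
  (Sh 𝓕).card = 𝓕.card

/-- The Vapnik–Chervonenkis dimension: the maximum cardinality of a shattered set. -/
noncomputable def dimVC {n : ℕ} (𝓕 : Finset (Finset (Fin n))) : ℕ :=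
  (Sh 𝓕).sup Finset.card

namespace StepB

open Finset

variable {n : ℕ}

lemma mem_Sh {𝓕 : Finset (Finset (Fin n))} {S : Finset (Fin n)} :
    S ∈ Sh 𝓕 ↔ _root_.Shatters 𝓕 S := by
  classical
  simp [Sh]

/-- The part of `𝓕` avoiding `x`. -/
def Fz (𝓕 : Finset (Finset (Fin n))) (x : Fin n) : Finset (Finset (Fin n)) :=
  𝓕.filter (fun A => x ∉ A)

/-- The part of `𝓕` containing `x`, with `x` erased. -/
def Fo (𝓕 : Finset (Finset (Fin n))) (x : Fin n) : Finset (Finset (Fin n)) :=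
  (𝓕.filter (fun A => x ∈ A)).image (fun A => A.erase x)

lemma mem_Fz {𝓕 : Finset (Finset (Fin n))} {x : Fin n} {A : Finset (Fin n)} :
    A ∈ Fz 𝓕 x ↔ A ∈ 𝓕 ∧ x ∉ A := by simp [Fz]

lemma mem_Fo {𝓕 : Finset (Finset (Fin n))} {x : Fin n} {A : Finset (Fin n)} :
    A ∈ Fo 𝓕 x ↔ x ∉ A ∧ insert x A ∈ 𝓕 := by
  simp only [Fo, mem_image, mem_filter]
  constructor
  · rintro ⟨B, ⟨hB, hxB⟩, rfl⟩
    exact ⟨notMem_erase _ _, by rwa [insert_erase hxB]⟩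
  · rintro ⟨hxA, hA⟩
    exact ⟨insert x A, ⟨hA, mem_insert_self _ _⟩, erase_insert hxA⟩

lemma avoid_Fz {𝓕 : Finset (Finset (Fin n))} {x : Fin n} :
    ∀ A ∈ Fz 𝓕 x ∪ Fo 𝓕 x, x ∉ A := by
  intro A hA
  rcases mem_union.mp hA with h | h
  · exact (mem_Fz.mp h).2
  · exact (mem_Fo.mp h).1

lemma card_Fo (𝓕 : Finset (Finset (Fin n))) (x : Fin n) :
    (Fo 𝓕 x).card = (𝓕.filter (fun A => x ∈ A)).card :=
  card_image_of_injOn (fun A hA B hB hAB => by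
    simp only [coe_filter, Set.mem_setOf_eq] at hA hB
    rw [← insert_erase hA.2, hAB, insert_erase hB.2])

lemma card_FzFo (𝓕 : Finset (Finset (Fin n))) (x : Fin n) :
    (Fz 𝓕 x ∩ Fo 𝓕 x).card + (Fz 𝓕 x ∪ Fo 𝓕 x).card = 𝓕.card := by
  rw [card_inter_add_card_union, card_Fo]
  have := card_filter_add_card_filter_not (s := 𝓕) (p := fun A => x ∈ A)
  simp only [Fz]
  omega

/-- Total size measure. -/
def mu (𝓕 : Finset (Finset (Fin n))) : ℕ := ∑ A ∈ 𝓕, A.card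

lemma mu_mono {𝓕 𝓖 : Finset (Finset (Fin n))} (h : 𝓕 ⊆ 𝓖) : mu 𝓕 ≤ mu 𝓖 :=
  sum_le_sum_of_subset h

lemma mu_union_le (𝓕 𝓖 : Finset (Finset (Fin n))) : mu (𝓕 ∪ 𝓖) ≤ mu 𝓕 + mu 𝓖 := by
  have h1 : 𝓕 ∪ 𝓖 = 𝓕 ∪ (𝓖 \ 𝓕) := by rw [union_sdiff_self_eq_union]
  rw [mu, h1, sum_union (disjoint_sdiff)]
  exact Nat.add_le_add_left (mu_mono (sdiff_subset)) _

lemma mu_Fo_add (𝓕 : Finset (Finset (Fin n))) (x : Fin n) :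
    mu (Fo 𝓕 x) + (𝓕.filter (fun A => x ∈ A)).card = ∑ A ∈ 𝓕.filter (fun A => x ∈ A), A.card := by
  have himg : mu (Fo 𝓕 x) = ∑ A ∈ 𝓕.filter (fun A => x ∈ A), (A.erase x).card := by
    refine sum_image ?_
    intro A hA B hB hAB
    simp only [mem_filter, mem_coe, coe_filter, Set.mem_setOf_eq] at hA hB hAB
    rw [← insert_erase hA.2, hAB, insert_erase hB.2]
  rw [himg, card_eq_sum_ones, ← sum_add_distrib]
  refine sum_congr rfl ?_
  intro A hA
  exact card_erase_add_one (mem_filter.mp hA).2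

lemma mu_split (𝓕 : Finset (Finset (Fin n))) (x : Fin n)
    (hx : (𝓕.filter (fun A => x ∈ A)).Nonempty) :
    mu (Fz 𝓕 x ∩ Fo 𝓕 x) < mu 𝓕 ∧ mu (Fz 𝓕 x ∪ Fo 𝓕 x) < mu 𝓕 := by
  have h1 : mu (Fz 𝓕 x) + ∑ A ∈ 𝓕.filter (fun A => x ∈ A), A.card = mu 𝓕 := by
    have := sum_filter_add_sum_filter_not 𝓕 (fun A => x ∈ A) (fun A => A.card)
    simp only [mu, Fz]
    omega
  have h2 := mu_Fo_add 𝓕 x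
  have h3 : 1 ≤ (𝓕.filter (fun A => x ∈ A)).card := card_pos.mpr hx
  have h4 : mu (Fz 𝓕 x ∩ Fo 𝓕 x) ≤ mu (Fo 𝓕 x) := mu_mono inter_subset_right
  have h5 := mu_union_le (Fz 𝓕 x) (Fo 𝓕 x)
  omega

lemma shatters_avoid {𝓖 : Finset (Finset (Fin n))} {x : Fin n}
    (h : ∀ A ∈ 𝓖, x ∉ A) {S : Finset (Fin n)} (hS : _root_.Shatters 𝓖 S) : x ∉ S := by
  intro hxS
  obtain ⟨A, hA, hAS⟩ := hS {x} (singleton_subset_iff.mpr hxS)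
  have : x ∈ A ∩ S := hAS ▸ mem_singleton_self x
  exact h A hA (mem_inter.mp this).1

lemma shatters_union_case {𝓕 : Finset (Finset (Fin n))} {x : Fin n} {S : Finset (Fin n)}
    (hS : _root_.Shatters (Fz 𝓕 x ∪ Fo 𝓕 x) S) : _root_.Shatters 𝓕 S := by
  have hxS : x ∉ S := shatters_avoid avoid_Fz hS
  intro T hT
  obtain ⟨A, hA, hAS⟩ := hS T hT
  rcases mem_union.mp hA with h | h
  · exact ⟨A, (mem_Fz.mp h).1, hAS⟩
  · obtain ⟨hxA, hins⟩ := mem_Fo.mp h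
    exact ⟨insert x A, hins, by rw [insert_inter_of_notMem hxS, hAS]⟩

lemma shatters_inter_case {𝓕 : Finset (Finset (Fin n))} {x : Fin n} {S : Finset (Fin n)}
    (hS : _root_.Shatters (Fz 𝓕 x ∩ Fo 𝓕 x) S) : _root_.Shatters 𝓕 (insert x S) := by
  have havoid : ∀ A ∈ Fz 𝓕 x ∩ Fo 𝓕 x, x ∉ A := by
    intro A hA; exact (mem_Fz.mp (mem_inter.mp hA).1).2
  have hxS : x ∉ S := shatters_avoid havoid hS
  intro T hT
  by_cases hxT : x ∈ T
  · have hTe : T.erase x ⊆ S := by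
      intro t ht
      have h1 := mem_erase.mp ht
      rcases mem_insert.mp (hT h1.2) with h | h
      · exact absurd h h1.1
      · exact h
    obtain ⟨A, hA, hAS⟩ := hS (T.erase x) hTe
    have h1 := mem_Fz.mp (mem_inter.mp hA).1
    have h2 := mem_Fo.mp (mem_inter.mp hA).2
    refine ⟨insert x A, h2.2, ?_⟩
    ext t
    simp only [mem_inter, mem_insert]
    constructor
    · rintro ⟨h3 | h3, h4 | h4⟩
      · exact h3 ▸ hxT
      · exact h3 ▸ hxT
      · exact absurd h4.symm (by rintro rfl; exact h1.2 h3)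
      · have : t ∈ A ∩ S := mem_inter.mpr ⟨h3, h4⟩
        exact (mem_erase.mp (hAS ▸ this)).2
    · intro ht
      by_cases htx : t = x
      · exact ⟨Or.inl htx, Or.inl htx⟩
      · have : t ∈ A ∩ S := hAS ▸ mem_erase.mpr ⟨htx, ht⟩
        have := mem_inter.mp this
        exact ⟨Or.inr this.1, Or.inr this.2⟩
  · have hTS : T ⊆ S := by
      intro t ht
      rcases mem_insert.mp (hT ht) with h | h
      · exact absurd (h ▸ ht) hxT
      · exact h
    obtain ⟨A, hA, hAS⟩ := hS T hTS
    have h1 := mem_Fz.mp (mem_inter.mp hA).1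
    exact ⟨A, h1.1, by rw [inter_insert_of_notMem h1.2, hAS]⟩

lemma sh_card_split (𝓕 : Finset (Finset (Fin n))) (x : Fin n) :
    (Sh (Fz 𝓕 x ∩ Fo 𝓕 x)).card + (Sh (Fz 𝓕 x ∪ Fo 𝓕 x)).card ≤ (Sh 𝓕).card ∧
    ((Sh (Fz 𝓕 x ∩ Fo 𝓕 x)).image (insert x) ∪ Sh (Fz 𝓕 x ∪ Fo 𝓕 x)) ⊆ Sh 𝓕 := by
  have havoid : ∀ A ∈ Fz 𝓕 x ∩ Fo 𝓕 x, x ∉ A := by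
    intro A hA; exact (mem_Fz.mp (mem_inter.mp hA).1).2
  have hsub : ((Sh (Fz 𝓕 x ∩ Fo 𝓕 x)).image (insert x) ∪ Sh (Fz 𝓕 x ∪ Fo 𝓕 x)) ⊆ Sh 𝓕 := by
    intro S hS
    rcases mem_union.mp hS with h | h
    · obtain ⟨S', hS', rfl⟩ := mem_image.mp h
      exact mem_Sh.mpr (shatters_inter_case (mem_Sh.mp hS'))
    · exact mem_Sh.mpr (shatters_union_case (mem_Sh.mp h))
  refine ⟨?_, hsub⟩
  have hdisj : Disjoint ((Sh (Fz 𝓕 x ∩ Fo 𝓕 x)).image (insert x)) (Sh (Fz 𝓕 x ∪ Fo 𝓕 x)) := by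
    rw [disjoint_left]
    intro S hS hS'
    have hx1 : x ∉ S := shatters_avoid avoid_Fz (mem_Sh.mp hS')
    obtain ⟨S', _, rfl⟩ := mem_image.mp hS
    exact hx1 (mem_insert_self _ _)
  have hinj : ((Sh (Fz 𝓕 x ∩ Fo 𝓕 x)).image (insert x)).card = (Sh (Fz 𝓕 x ∩ Fo 𝓕 x)).card := by
    refine card_image_of_injOn ?_
    intro A hA B hB hAB
    simp only [mem_coe, mem_Sh] at hA hB
    have hxA : x ∉ A := shatters_avoid (fun C hC => (mem_Fz.mp (mem_inter.mp hC).1).2) hA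
    have hxB : x ∉ B := shatters_avoid (fun C hC => (mem_Fz.mp (mem_inter.mp hC).1).2) hB
    rw [← erase_insert hxA, hAB, erase_insert hxB]
  calc (Sh (Fz 𝓕 x ∩ Fo 𝓕 x)).card + (Sh (Fz 𝓕 x ∪ Fo 𝓕 x)).card
      = (((Sh (Fz 𝓕 x ∩ Fo 𝓕 x)).image (insert x)) ∪ Sh (Fz 𝓕 x ∪ Fo 𝓕 x)).card := by
        rw [card_union_of_disjoint hdisj, hinj]
    _ ≤ (Sh 𝓕).card := card_le_card hsub

/-- Pajor's lemma: a family shatters at least as many sets as it has members. -/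
lemma pajor : ∀ m : ℕ, ∀ 𝓕 : Finset (Finset (Fin n)), mu 𝓕 ≤ m → 𝓕.card ≤ (Sh 𝓕).card := by
  intro m
  induction m using Nat.strong_induction_on with
  | _ m ih =>
    intro 𝓕 hmu
    by_cases hx : ∃ x : Fin n, (𝓕.filter (fun A => x ∈ A)).Nonempty
    · obtain ⟨x, hxne⟩ := hx
      have hsplit := mu_split 𝓕 x hxne
      have h1 : (Fz 𝓕 x ∩ Fo 𝓕 x).card ≤ (Sh (Fz 𝓕 x ∩ Fo 𝓕 x)).card := by
        rcases Nat.eq_zero_or_pos m with rfl | hm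
        · omega
        · exact ih (mu (Fz 𝓕 x ∩ Fo 𝓕 x)) (by omega) _ le_rfl
      have h2 : (Fz 𝓕 x ∪ Fo 𝓕 x).card ≤ (Sh (Fz 𝓕 x ∪ Fo 𝓕 x)).card := by
        rcases Nat.eq_zero_or_pos m with rfl | hm
        · omega
        · exact ih (mu (Fz 𝓕 x ∪ Fo 𝓕 x)) (by omega) _ le_rfl
      have h3 := (sh_card_split 𝓕 x).1
      have h4 := card_FzFo 𝓕 x
      omega
    · push_neg at hx
      have hempty : ∀ A ∈ 𝓕, A = ∅ := by
        intro A hA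
        rw [eq_empty_iff_forall_notMem]
        intro t ht
        exact (not_nonempty_iff_eq_empty.mpr (hx t)) ⟨A, mem_filter.mpr ⟨hA, ht⟩⟩
      rcases 𝓕.eq_empty_or_nonempty with rfl | ⟨A, hA⟩
      · simp
      · have h𝓕 : 𝓕 = {∅} := by
          apply Subset.antisymm
          · intro B hB; simp [hempty B hB]
          · intro B hB
            simp only [mem_singleton] at hB
            rwa [hB, ← hempty A hA]
        rw [h𝓕]
        have : (∅ : Finset (Fin n)) ∈ Sh ({∅} : Finset (Finset (Fin n))) := by
          rw [mem_Sh]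
          intro T hT
          rw [subset_empty.mp hT]
          exact ⟨∅, mem_singleton_self _, by simp⟩
        calc ({∅} : Finset (Finset (Fin n))).card = 1 := card_singleton _
          _ ≤ (Sh ({∅} : Finset (Finset (Fin n)))).card := card_pos.mpr ⟨∅, this⟩

lemma pajor' (𝓕 : Finset (Finset (Fin n))) : 𝓕.card ≤ (Sh 𝓕).card :=
  pajor (mu 𝓕) 𝓕 le_rfl

/-- Extremality transfer along the standard decomposition. -/
lemma extremal_transfer {𝓕 : Finset (Finset (Fin n))} (h : Extremal 𝓕) (x : Fin n)
    (hx : (𝓕.filter (fun A => x ∈ A)).Nonempty) :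
    Extremal (Fz 𝓕 x ∩ Fo 𝓕 x) ∧ (Fz 𝓕 x ∩ Fo 𝓕 x).card < 𝓕.card ∧
      (∀ S : Finset (Fin n), _root_.Shatters 𝓕 S → x ∈ S → _root_.Shatters (Fz 𝓕 x ∩ Fo 𝓕 x) (S.erase x)) := by
  obtain ⟨hcard, hsub⟩ := sh_card_split 𝓕 x
  have hp1 := pajor' (Fz 𝓕 x ∩ Fo 𝓕 x)
  have hp2 := pajor' (Fz 𝓕 x ∪ Fo 𝓕 x)
  have hsplit := card_FzFo 𝓕 x
  have hFocard : (Fz 𝓕 x ∪ Fo 𝓕 x).Nonempty := by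
    obtain ⟨A, hA⟩ := hx
    have : A.erase x ∈ Fo 𝓕 x := mem_image_of_mem _ hA
    exact ⟨A.erase x, mem_union_right _ this⟩
  have hFo1 : 1 ≤ (Fz 𝓕 x ∪ Fo 𝓕 x).card := card_pos.mpr hFocard
  have hext : Extremal (Fz 𝓕 x ∩ Fo 𝓕 x) := by unfold Extremal at h ⊢; omega
  have hltcard : (Fz 𝓕 x ∩ Fo 𝓕 x).card < 𝓕.card := by omega
  refine ⟨hext, hltcard, ?_⟩
  -- the union in sh_card_split is all of Sh 𝓕
  have hUeq : ((Sh (Fz 𝓕 x ∩ Fo 𝓕 x)).image (insert x) ∪ Sh (Fz 𝓕 x ∪ Fo 𝓕 x)) = Sh 𝓕 := by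
    apply eq_of_subset_of_card_le hsub
    have hdisj : Disjoint ((Sh (Fz 𝓕 x ∩ Fo 𝓕 x)).image (insert x)) (Sh (Fz 𝓕 x ∪ Fo 𝓕 x)) := by
      rw [disjoint_left]
      intro S hS hS'
      have hx1 : x ∉ S := shatters_avoid avoid_Fz (mem_Sh.mp hS')
      obtain ⟨S', _, rfl⟩ := mem_image.mp hS
      exact hx1 (mem_insert_self _ _)
    rw [card_union_of_disjoint hdisj]
    have himg : ((Sh (Fz 𝓕 x ∩ Fo 𝓕 x)).image (insert x)).card ≥ (Fz 𝓕 x ∩ Fo 𝓕 x).card := by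
      calc (Fz 𝓕 x ∩ Fo 𝓕 x).card ≤ (Sh (Fz 𝓕 x ∩ Fo 𝓕 x)).card := hp1
        _ = ((Sh (Fz 𝓕 x ∩ Fo 𝓕 x)).image (insert x)).card := by
            refine (card_image_of_injOn ?_).symm
            intro A hA B hB hAB
            simp only [mem_coe, mem_Sh] at hA hB
            have hxA : x ∉ A := shatters_avoid (fun C hC => (mem_Fz.mp (mem_inter.mp hC).1).2) hA
            have hxB : x ∉ B := shatters_avoid (fun C hC => (mem_Fz.mp (mem_inter.mp hC).1).2) hB
            rw [← erase_insert hxA, hAB, erase_insert hxB]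
    unfold Extremal at h
    omega
  intro S hS hxS
  have hSmem : S ∈ ((Sh (Fz 𝓕 x ∩ Fo 𝓕 x)).image (insert x) ∪ Sh (Fz 𝓕 x ∪ Fo 𝓕 x)) :=
    hUeq ▸ mem_Sh.mpr hS
  rcases mem_union.mp hSmem with hmem | hmem
  · obtain ⟨S', hS', rfl⟩ := mem_image.mp hmem
    have hxS' : x ∉ S' :=
      shatters_avoid (fun C hC => (mem_Fz.mp (mem_inter.mp hC).1).2) (mem_Sh.mp hS')
    rw [erase_insert hxS']
    exact mem_Sh.mp hS'
  · exact absurd hxS (shatters_avoid avoid_Fz (mem_Sh.mp hmem))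

/-- Key lemma: in an extremal family, every shattered set is strongly shattered. -/
lemma extremal_shatters_strongly :
    ∀ m : ℕ, ∀ 𝓕 : Finset (Finset (Fin n)), 𝓕.card ≤ m → Extremal 𝓕 →
      ∀ S : Finset (Fin n), _root_.Shatters 𝓕 S → StronglyShatters 𝓕 S := by
  intro m
  induction m using Nat.strong_induction_on with
  | _ m ih =>
    intro 𝓕 hcard hext S hS
    rcases S.eq_empty_or_nonempty with rfl | ⟨x, hxS⟩
    · obtain ⟨A, hA, -⟩ := hS ∅ (Subset.refl _)
      exact ⟨A, by simp, fun H hH => by rw [subset_empty.mp hH, empty_union]; exact hA⟩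
    · -- x ∈ S; get a member containing x
      obtain ⟨A, hA, hAS⟩ := hS {x} (singleton_subset_iff.mpr hxS)
      have hxA : x ∈ A := by
        have : x ∈ A ∩ S := hAS ▸ mem_singleton_self x
        exact (mem_inter.mp this).1
      have hxne : (𝓕.filter (fun B => x ∈ B)).Nonempty := ⟨A, mem_filter.mpr ⟨hA, hxA⟩⟩
      obtain ⟨hext', hlt, htrans⟩ := extremal_transfer hext x hxne
      have hS' : _root_.Shatters (Fz 𝓕 x ∩ Fo 𝓕 x) (S.erase x) := htrans S hS hxS
      have hm : 1 ≤ m := le_trans (Nat.one_le_iff_ne_zero.mpr (by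
        intro h0
        have := card_eq_zero.mp (Nat.le_zero.mp (h0 ▸ hcard))
        rw [this] at hA
        exact absurd hA (notMem_empty _))) le_rfl
      have hst' : StronglyShatters (Fz 𝓕 x ∩ Fo 𝓕 x) (S.erase x) :=
        ih (Fz 𝓕 x ∩ Fo 𝓕 x).card (by omega) _ le_rfl hext' _ hS'
      obtain ⟨I, hIsub, hImem⟩ := hst'
      have hIF' : I ∈ Fz 𝓕 x ∩ Fo 𝓕 x := by
        have := hImem ∅ (empty_subset _)
        rwa [empty_union] at this
      have hxI : x ∉ I := (mem_Fz.mp (mem_inter.mp hIF').1).2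
      refine ⟨I, ?_, ?_⟩
      · intro t ht
        have h1 := mem_compl.mp (hIsub ht)
        rw [mem_compl]
        intro htS
        exact h1 (mem_erase.mpr ⟨fun h => (h ▸ hxI) ht, htS⟩)
      · intro H hH
        have hHe : H.erase x ⊆ S.erase x := erase_subset_erase x hH
        have hmem := mem_inter.mp (hImem (H.erase x) hHe)
        have hmem1 : H.erase x ∪ I ∈ 𝓕 := (mem_Fz.mp hmem.1).1
        have hmem2 : insert x (H.erase x ∪ I) ∈ 𝓕 := (mem_Fo.mp hmem.2).2
        by_cases hxH : x ∈ H
        · have : H ∪ I = insert x (H.erase x ∪ I) := by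
            ext t
            simp only [mem_union, mem_insert, mem_erase]
            constructor
            · rintro (ht | ht)
              · by_cases htx : t = x
                · exact Or.inl htx
                · exact Or.inr (Or.inl ⟨htx, ht⟩)
              · exact Or.inr (Or.inr ht)
            · rintro (rfl | ⟨-, ht⟩ | ht)
              · exact Or.inl hxH
              · exact Or.inl ht
              · exact Or.inr ht
          rw [this]; exact hmem2
        · have : H ∪ I = H.erase x ∪ I := by
            rw [erase_eq_of_notMem hxH]
          rw [this]; exact hmem1

lemma extremal_sh_st {𝓕 : Finset (Finset (Fin n))} (h : Extremal 𝓕)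
    {S : Finset (Fin n)} (hS : _root_.Shatters 𝓕 S) : StronglyShatters 𝓕 S :=
  extremal_shatters_strongly 𝓕.card 𝓕 le_rfl h S hS

lemma strongly_shatters_mono {𝓕 : Finset (Finset (Fin n))} {S S' : Finset (Fin n)}
    (hsub : S' ⊆ S) (h : StronglyShatters 𝓕 S) : StronglyShatters 𝓕 S' := by
  obtain ⟨I, hI, hmem⟩ := h
  exact ⟨I, fun t ht => mem_compl.mpr (fun h' => mem_compl.mp (hI ht) (hsub h')),
    fun H hH => hmem H (hH.trans hsub)⟩

end StepB

set_option maxHeartbeats 2000000 in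
/-- Step B: if `{α, β}` is not strongly shattered by the shattering-extremal family
`𝓕` and `P, W, Q ∈ 𝓕` satisfy `Q ∆ W = {α}`, `P ∆ W = {β}`, then `V = W ∆ {α, β}`
is not in `𝓕`, `𝓕 ∪ {V}` is shattering-extremal, and
`dimVC (𝓕 ∪ {V}) ≤ max (dimVC 𝓕) 2`. -/
theorem stepB_extremal (n : ℕ) (𝓕 : Finset (Finset (Fin n))) (h : Extremal 𝓕)
    (α β : Fin n) (hne : α ≠ β)
    (hst : ¬ StronglyShatters 𝓕 ({α, β} : Finset (Fin n)))
    (P W Q : Finset (Fin n)) (hP : P ∈ 𝓕) (hW : W ∈ 𝓕) (hQ : Q ∈ 𝓕)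
    (hQW : Q ∆ W = ({α} : Finset (Fin n))) (hPW : P ∆ W = ({β} : Finset (Fin n))) :
    W ∆ ({α, β} : Finset (Fin n)) ∉ 𝓕 ∧
      Extremal (insert (W ∆ ({α, β} : Finset (Fin n))) 𝓕) ∧
      dimVC (insert (W ∆ ({α, β} : Finset (Fin n))) 𝓕) ≤ max (dimVC 𝓕) 2 := by
  open StepB Finset in
  classical
  have hQ' : Q = W ∆ ({α} : Finset (Fin n)) := by
    have h1 : Q ∆ W ∆ W = ({α} : Finset (Fin n)) ∆ W := by rw [hQW]
    rw [symmDiff_symmDiff_cancel_right] at h1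
    rw [h1, symmDiff_comm]
  have hP' : P = W ∆ ({β} : Finset (Fin n)) := by
    have h1 : P ∆ W ∆ W = ({β} : Finset (Fin n)) ∆ W := by rw [hPW]
    rw [symmDiff_symmDiff_cancel_right] at h1
    rw [h1, symmDiff_comm]
  have pair_cases : ∀ D : Finset (Fin n), D ⊆ ({α, β} : Finset (Fin n)) →
      D = ∅ ∨ D = {α} ∨ D = {β} ∨ D = ({α, β} : Finset (Fin n)) := by
    intro D hD
    by_cases hα : α ∈ D <;> by_cases hβ : β ∈ D
    · refine Or.inr (Or.inr (Or.inr ?_))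
      exact Finset.Subset.antisymm hD (Finset.insert_subset hα (Finset.singleton_subset_iff.mpr hβ))
    · refine Or.inr (Or.inl ?_)
      apply Finset.Subset.antisymm _ (Finset.singleton_subset_iff.mpr hα)
      intro t ht
      rcases Finset.mem_insert.mp (hD ht) with h | h
      · simpa [h]
      · exact absurd ((Finset.mem_singleton.mp h) ▸ ht) hβ
    · refine Or.inr (Or.inr (Or.inl ?_))
      apply Finset.Subset.antisymm _ (Finset.singleton_subset_iff.mpr hβ)
      intro t ht
      rcases Finset.mem_insert.mp (hD ht) with h | h
      · exact absurd (h ▸ ht) hα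
      · simpa [Finset.mem_singleton.mp h]
    · refine Or.inl (Finset.eq_empty_iff_forall_notMem.mpr ?_)
      intro t ht
      rcases Finset.mem_insert.mp (hD ht) with h | h
      · exact hα (h ▸ ht)
      · exact hβ ((Finset.mem_singleton.mp h) ▸ ht)
  have cube : ∀ 𝓖 : Finset (Finset (Fin n)), W ∈ 𝓖 → Q ∈ 𝓖 → P ∈ 𝓖 →
      (W ∆ ({α, β} : Finset (Fin n))) ∈ 𝓖 →
      ∀ D ⊆ ({α, β} : Finset (Fin n)), W ∆ D ∈ 𝓖 := by
    intro 𝓖 h1 h2 h3 h4 D hD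
    rcases pair_cases D hD with rfl | rfl | rfl | rfl
    · rwa [← Finset.bot_eq_empty, symmDiff_bot]
    · rwa [← hQ']
    · rwa [← hP']
    · exact h4
  -- Part 1 : V ∉ 𝓕
  have hVnot : W ∆ ({α, β} : Finset (Fin n)) ∉ 𝓕 := by
    intro hVF
    apply hst
    refine ⟨W \ ({α, β} : Finset (Fin n)), ?_, ?_⟩
    · intro t ht
      exact Finset.mem_compl.mpr (Finset.mem_sdiff.mp ht).2
    · intro H hH
      have key : H ∪ (W \ ({α, β} : Finset (Fin n))) =
          W ∆ ((W ∩ ({α, β} : Finset (Fin n))) ∆ H) := by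
        ext t
        have ht : t ∈ H → t ∈ ({α, β} : Finset (Fin n)) := fun h' => hH h'
        simp only [Finset.mem_union, Finset.mem_sdiff, Finset.mem_symmDiff, Finset.mem_inter]
        tauto
      rw [key]
      refine cube 𝓕 hW hQ hP hVF _ ?_
      intro t ht
      rcases Finset.mem_symmDiff.mp ht with h' | h'
      · exact (Finset.mem_inter.mp h'.1).2
      · exact hH h'.1
  have hG : ∀ A ∈ 𝓕, A ∈ insert (W ∆ ({α, β} : Finset (Fin n))) 𝓕 :=
    fun A hA => Finset.mem_insert_of_mem hA
  -- {α, β} is shattered by G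
  have hSh_pair : _root_.Shatters (insert (W ∆ ({α, β} : Finset (Fin n))) 𝓕)
      ({α, β} : Finset (Fin n)) := by
    intro T hT
    refine ⟨W ∆ ((W ∩ ({α, β} : Finset (Fin n))) ∆ T), ?_, ?_⟩
    · refine cube _ (hG W hW) (hG Q hQ) (hG P hP) (Finset.mem_insert_self _ _) _ ?_
      intro t ht
      rcases Finset.mem_symmDiff.mp ht with h' | h'
      · exact (Finset.mem_inter.mp h'.1).2
      · exact hT h'.1
    · ext t
      have ht : t ∈ T → t ∈ ({α, β} : Finset (Fin n)) := fun h' => hT h'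
      simp only [Finset.mem_inter, Finset.mem_symmDiff]
      tauto
  have hpair_not : ¬ _root_.Shatters 𝓕 ({α, β} : Finset (Fin n)) :=
    fun hs => hst (extremal_sh_st h hs)
  -- main inclusion
  have main : ∀ S : Finset (Fin n),
      _root_.Shatters (insert (W ∆ ({α, β} : Finset (Fin n))) 𝓕) S →
      S = ({α, β} : Finset (Fin n)) ∨ _root_.Shatters 𝓕 S := by
    intro S hSG
    by_cases hSF : _root_.Shatters 𝓕 S
    · exact Or.inr hSF
    left
    rw [_root_.Shatters] at hSF
    push_neg at hSF
    obtain ⟨T, hTS, hT⟩ := hSF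
    obtain ⟨A, hAG, hAT⟩ := hSG T hTS
    have hVT : (W ∆ ({α, β} : Finset (Fin n))) ∩ S = T := by
      rcases Finset.mem_insert.mp hAG with rfl | hAF
      · exact hAT
      · exact absurd hAT (hT A hAF)
    have hαS : α ∈ S := by
      by_contra hα
      have hta : ∀ t, t ∈ S → ¬ t = α := fun t h' hh => hα (hh ▸ h')
      by_cases hβ : β ∈ S
      · refine hT P hP ?_
        rw [← hVT, hP']
        ext t
        by_cases htS : t ∈ S
        · have := hta t htS
          simp only [Finset.mem_inter, Finset.mem_symmDiff, Finset.mem_insert,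
            Finset.mem_singleton]
          tauto
        · simp [htS]
      · have htb : ∀ t, t ∈ S → ¬ t = β := fun t h' hh => hβ (hh ▸ h')
        refine hT W hW ?_
        rw [← hVT]
        ext t
        by_cases htS : t ∈ S
        · have h1 := hta t htS
          have h2 := htb t htS
          simp only [Finset.mem_inter, Finset.mem_symmDiff, Finset.mem_insert,
            Finset.mem_singleton]
          tauto
        · simp [htS]
    have hβS : β ∈ S := by
      by_contra hβ
      have htb : ∀ t, t ∈ S → ¬ t = β := fun t h' hh => hβ (hh ▸ h')
      refine hT Q hQ ?_
      rw [← hVT, hQ']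
      ext t
      by_cases htS : t ∈ S
      · have := htb t htS
        simp only [Finset.mem_inter, Finset.mem_symmDiff, Finset.mem_insert,
          Finset.mem_singleton]
        tauto
      · simp [htS]
    have hSsub : S ⊆ ({α, β} : Finset (Fin n)) := by
      intro γ hγ
      by_contra hγab
      have hγα : γ ≠ α := fun e => hγab (e ▸ Finset.mem_insert_self _ _)
      have hγβ : γ ≠ β := fun e => hγab (e ▸ Finset.mem_insert_of_mem (Finset.mem_singleton_self _))
      have hsh' : _root_.Shatters 𝓕 (S.erase γ) := by
        intro T' hT'
        have hT'S : T' ⊆ S := hT'.trans (Finset.erase_subset _ _)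
        have hγT' : γ ∉ T' := fun hh => (Finset.mem_erase.mp (hT' hh)).1 rfl
        obtain ⟨A, hAG, hA⟩ := hSG T' hT'S
        obtain ⟨B, hBG, hB⟩ := hSG (insert γ T') (Finset.insert_subset hγ hT'S)
        rcases Finset.mem_insert.mp hAG with rfl | hAF
        · rcases Finset.mem_insert.mp hBG with rfl | hBF
          · exfalso
            exact hγT' (by rw [← hA, hB]; exact Finset.mem_insert_self γ T')
          · refine ⟨B, hBF, ?_⟩
            rw [Finset.inter_erase, hB, Finset.erase_insert hγT']
        · refine ⟨A, hAF, ?_⟩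
          rw [Finset.inter_erase, hA, Finset.erase_eq_of_notMem hγT']
      have hsub2 : ({α, β} : Finset (Fin n)) ⊆ S.erase γ := by
        refine Finset.insert_subset (Finset.mem_erase.mpr ⟨hγα.symm, hαS⟩) ?_
        exact Finset.singleton_subset_iff.mpr (Finset.mem_erase.mpr ⟨hγβ.symm, hβS⟩)
      exact hst (strongly_shatters_mono hsub2 (extremal_sh_st h hsh'))
    exact Finset.Subset.antisymm hSsub
      (Finset.insert_subset hαS (Finset.singleton_subset_iff.mpr hβS))
  -- Sh of the extended family
  have hShG : Sh (insert (W ∆ ({α, β} : Finset (Fin n))) 𝓕) =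
      insert ({α, β} : Finset (Fin n)) (Sh 𝓕) := by
    apply Finset.Subset.antisymm
    · intro S hS
      rcases main S (mem_Sh.mp hS) with rfl | hf
      · exact Finset.mem_insert_self _ _
      · exact Finset.mem_insert_of_mem (mem_Sh.mpr hf)
    · intro S hS
      rcases Finset.mem_insert.mp hS with rfl | hSF
      · exact mem_Sh.mpr hSh_pair
      · refine mem_Sh.mpr (fun T hT => ?_)
        obtain ⟨A, hA, ht⟩ := mem_Sh.mp hSF T hT
        exact ⟨A, Finset.mem_insert_of_mem hA, ht⟩
  have hpair_notSh : ({α, β} : Finset (Fin n)) ∉ Sh 𝓕 := fun hh => hpair_not (mem_Sh.mp hh)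
  refine ⟨hVnot, ?_, ?_⟩
  · unfold Extremal
    rw [hShG, Finset.card_insert_of_notMem hpair_notSh,
      Finset.card_insert_of_notMem hVnot, h]
  · unfold dimVC
    rw [hShG, Finset.sup_insert]
    have hcard2 : ({α, β} : Finset (Fin n)).card = 2 := by
      rw [Finset.card_insert_of_notMem (fun hh => hne (Finset.mem_singleton.mp hh)),
        Finset.card_singleton]
    rw [hcard2]
    exact le_of_eq (max_comm 2 _)
end

section
/- Let F ⊆ 2^[n] be shattering-extremal with dim_VC(F) ≤ 2, let α, β ∈ [n] be distinct with {α, β} not strongly shattered by F, and let P, W, Q ∈ F satisfy Q △ W = {α} and P △ W = {β}. Set V = W △ {α, β}. Then every X ∈ F with |X △ V| = 1 equals P or Q; that is, in the inclusion graph of F ∪ {V} the new vertex V is adjacent only to P and Q. -/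
open scoped symmDiff

namespace StepBAux

open Finset

variable {n : ℕ}

lemma mem_Sh {𝓕 : Finset (Finset (Fin n))} {S : Finset (Fin n)} :
    S ∈ Sh 𝓕 ↔ _root_.Shatters 𝓕 S := by
  classical
  simp [Sh]

noncomputable def F0 (𝓕 : Finset (Finset (Fin n))) (i : Fin n) : Finset (Finset (Fin n)) :=
  𝓕.filter (fun a => ¬ i ∈ a)

noncomputable def F1 (𝓕 : Finset (Finset (Fin n))) (i : Fin n) : Finset (Finset (Fin n)) :=
  (𝓕.filter (fun F => i ∈ F)).image (fun F => F.erase i)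

lemma mem_F0 {𝓕 : Finset (Finset (Fin n))} {i : Fin n} {F : Finset (Fin n)} :
    F ∈ F0 𝓕 i ↔ F ∈ 𝓕 ∧ i ∉ F := by simp [F0]

lemma mem_F1 {𝓕 : Finset (Finset (Fin n))} {i : Fin n} {G : Finset (Fin n)} :
    G ∈ F1 𝓕 i ↔ i ∉ G ∧ insert i G ∈ 𝓕 := by
  simp only [F1, mem_image, mem_filter]
  constructor
  · rintro ⟨F, ⟨hF, hiF⟩, rfl⟩
    exact ⟨notMem_erase _ _, by rwa [insert_erase hiF]⟩
  · rintro ⟨hiG, hG⟩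
    exact ⟨insert i G, ⟨hG, mem_insert_self _ _⟩, by rw [erase_insert hiG]⟩

lemma Fp_free {𝓕 : Finset (Finset (Fin n))} {i : Fin n} :
    ∀ F ∈ F0 𝓕 i ∪ F1 𝓕 i, i ∉ F := by
  intro F hF
  rcases mem_union.1 hF with h | h
  · exact (mem_F0.1 h).2
  · exact (mem_F1.1 h).1

lemma Fpp_free {𝓕 : Finset (Finset (Fin n))} {i : Fin n} :
    ∀ F ∈ F0 𝓕 i ∩ F1 𝓕 i, i ∉ F := fun F hF => (mem_F0.1 (mem_inter.1 hF).1).2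

/-- Measure for induction. -/
noncomputable def m (𝓕 : Finset (Finset (Fin n))) : ℕ := ∑ F ∈ 𝓕, F.card

lemma key_union (𝓕 : Finset (Finset (Fin n))) (i : Fin n) :
    𝓕.filter (fun F => i ∈ F) ∪ F0 𝓕 i = 𝓕 :=
  filter_union_filter_not_eq _ 𝓕

lemma key_disjoint (𝓕 : Finset (Finset (Fin n))) (i : Fin n) :
    Disjoint (𝓕.filter (fun F => i ∈ F)) (F0 𝓕 i) :=
  disjoint_filter_filter_not 𝓕 𝓕 _

lemma card_F1 (𝓕 : Finset (Finset (Fin n))) (i : Fin n) :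
    (F1 𝓕 i).card = (𝓕.filter (fun F => i ∈ F)).card := by
  apply card_image_of_injOn
  intro a ha b hb hab
  simp only [coe_filter, Set.mem_setOf_eq] at ha hb
  have hab' : a.erase i = b.erase i := hab
  rw [← insert_erase ha.2, hab', insert_erase hb.2]

lemma card_split (𝓕 : Finset (Finset (Fin n))) (i : Fin n) :
    (F0 𝓕 i ∪ F1 𝓕 i).card + (F0 𝓕 i ∩ F1 𝓕 i).card = 𝓕.card := by
  classical
  have h1 : (𝓕.filter (fun F => i ∈ F)).card + (F0 𝓕 i).card = 𝓕.card := by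
    rw [← card_union_of_disjoint (key_disjoint 𝓕 i), key_union]
  rw [card_union_add_card_inter, card_F1]
  omega

lemma m_F1_lt {𝓕 : Finset (Finset (Fin n))} {i : Fin n} {F : Finset (Fin n)}
    (hF : F ∈ 𝓕) (hiF : i ∈ F) :
    m (F1 𝓕 i) < m (𝓕.filter (fun F => i ∈ F)) := by
  classical
  have hsum : m (F1 𝓕 i) = ∑ G ∈ 𝓕.filter (fun F => i ∈ F), (G.erase i).card := by
    apply sum_image
    intro a ha b hb hab
    simp only [mem_coe, mem_filter] at ha hb
    have hab' : a.erase i = b.erase i := hab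
    rw [← insert_erase ha.2, hab', insert_erase hb.2]
  rw [hsum, m]
  apply sum_lt_sum_of_nonempty
  · exact ⟨F, mem_filter.2 ⟨hF, hiF⟩⟩
  · intro G hG
    exact card_erase_lt_of_mem (mem_filter.1 hG).2

lemma m_split (𝓕 : Finset (Finset (Fin n))) (i : Fin n) :
    m (𝓕.filter (fun F => i ∈ F)) + m (F0 𝓕 i) = m 𝓕 := by
  classical
  rw [m, m, m, ← sum_union (key_disjoint 𝓕 i), key_union]

lemma m_union_le (A B : Finset (Finset (Fin n))) : m (A ∪ B) ≤ m A + m B := by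
  classical
  calc m (A ∪ B) = ∑ F ∈ A ∪ B, F.card := rfl
  _ ≤ ∑ F ∈ A, F.card + ∑ F ∈ B \ A, F.card := by
      rw [← sum_union disjoint_sdiff]
      apply sum_le_sum_of_subset
      rw [union_sdiff_self_eq_union]
  _ ≤ m A + m B := add_le_add le_rfl (sum_le_sum_of_subset sdiff_subset)

lemma m_Fp_lt {𝓕 : Finset (Finset (Fin n))} {i : Fin n} {F : Finset (Fin n)}
    (hF : F ∈ 𝓕) (hiF : i ∈ F) : m (F0 𝓕 i ∪ F1 𝓕 i) < m 𝓕 := by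
  have h1 := m_union_le (F0 𝓕 i) (F1 𝓕 i)
  have h2 := m_F1_lt hF hiF
  have h3 := m_split 𝓕 i
  omega

lemma m_Fpp_lt {𝓕 : Finset (Finset (Fin n))} {i : Fin n} {F : Finset (Fin n)}
    (hF : F ∈ 𝓕) (hiF : i ∈ F) : m (F0 𝓕 i ∩ F1 𝓕 i) < m 𝓕 := by
  have h1 : m (F0 𝓕 i ∩ F1 𝓕 i) ≤ m (F1 𝓕 i) :=
    sum_le_sum_of_subset inter_subset_right
  have h2 := m_F1_lt hF hiF
  have h3 := m_split 𝓕 i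
  omega

lemma shatters_not_mem {𝓖 : Finset (Finset (Fin n))} {S : Finset (Fin n)} {i : Fin n}
    (h : _root_.Shatters 𝓖 S) (hfree : ∀ F ∈ 𝓖, i ∉ F) : i ∉ S := by
  intro hiS
  obtain ⟨F, hF, hFS⟩ := h {i} (singleton_subset_iff.2 hiS)
  have : i ∈ F ∩ S := hFS ▸ mem_singleton_self i
  exact hfree F hF (mem_inter.1 this).1

lemma shatters_Fp {𝓕 : Finset (Finset (Fin n))} {i : Fin n} {S : Finset (Fin n)}
    (h : _root_.Shatters (F0 𝓕 i ∪ F1 𝓕 i) S) : _root_.Shatters 𝓕 S := by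
  have hiS : i ∉ S := shatters_not_mem h Fp_free
  intro T hT
  obtain ⟨F, hF, hFS⟩ := h T hT
  rcases mem_union.1 hF with h0 | h1
  · exact ⟨F, (mem_F0.1 h0).1, hFS⟩
  · refine ⟨insert i F, (mem_F1.1 h1).2, ?_⟩
    rw [insert_inter_of_notMem hiS, hFS]

lemma shatters_Fpp {𝓕 : Finset (Finset (Fin n))} {i : Fin n} {T : Finset (Fin n)}
    (h : _root_.Shatters (F0 𝓕 i ∩ F1 𝓕 i) T) : _root_.Shatters 𝓕 (insert i T) := by
  intro U hU
  obtain ⟨F, hF, hFT⟩ := h (U.erase i) (fun x hx => by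
    have hxU := mem_of_mem_erase hx
    rcases mem_insert.1 (hU hxU) with rfl | hxT
    · exact absurd rfl (ne_of_mem_erase hx)
    · exact hxT)
  have hF0 := mem_F0.1 (mem_inter.1 hF).1
  have hF1 := mem_F1.1 (mem_inter.1 hF).2
  by_cases hiU : i ∈ U
  · refine ⟨insert i F, hF1.2, ?_⟩
    have heq : insert i F ∩ insert i T = insert i (F ∩ T) := by
      ext x; simp only [mem_inter, mem_insert]; tauto
    rw [heq, hFT, insert_erase hiU]
  · refine ⟨F, hF0.1, ?_⟩
    rw [inter_insert_of_notMem hF0.2, hFT, erase_eq_of_notMem hiU]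

lemma sh_not_mem {𝓖 : Finset (Finset (Fin n))} {i : Fin n}
    (hfree : ∀ F ∈ 𝓖, i ∉ F) : ∀ S ∈ Sh 𝓖, i ∉ S :=
  fun _ hS => shatters_not_mem (mem_Sh.1 hS) hfree

lemma sh_union_subset {𝓕 : Finset (Finset (Fin n))} (i : Fin n) :
    Sh (F0 𝓕 i ∪ F1 𝓕 i) ∪ (Sh (F0 𝓕 i ∩ F1 𝓕 i)).image (insert i) ⊆ Sh 𝓕 := by
  intro S hS
  rcases mem_union.1 hS with h | h
  · exact mem_Sh.2 (shatters_Fp (mem_Sh.1 h))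
  · obtain ⟨T, hT, rfl⟩ := mem_image.1 h
    exact mem_Sh.2 (shatters_Fpp (mem_Sh.1 hT))

lemma sh_union_card (𝓕 : Finset (Finset (Fin n))) (i : Fin n) :
    (Sh (F0 𝓕 i ∪ F1 𝓕 i) ∪ (Sh (F0 𝓕 i ∩ F1 𝓕 i)).image (insert i)).card
      = (Sh (F0 𝓕 i ∪ F1 𝓕 i)).card + (Sh (F0 𝓕 i ∩ F1 𝓕 i)).card := by
  classical
  have himg_card : ((Sh (F0 𝓕 i ∩ F1 𝓕 i)).image (insert i)).card
      = (Sh (F0 𝓕 i ∩ F1 𝓕 i)).card := by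
    apply card_image_of_injOn
    intro a ha b hb hab
    have hia := sh_not_mem Fpp_free a ha
    have hib := sh_not_mem Fpp_free b hb
    have hab' : insert i a = insert i b := hab
    rw [← erase_insert hia, hab', erase_insert hib]
  have hdisj : Disjoint (Sh (F0 𝓕 i ∪ F1 𝓕 i)) ((Sh (F0 𝓕 i ∩ F1 𝓕 i)).image (insert i)) := by
    rw [disjoint_left]
    intro S hS hS'
    obtain ⟨T, _, rfl⟩ := mem_image.1 hS'
    exact sh_not_mem Fp_free _ hS (mem_insert_self _ _)
  rw [card_union_of_disjoint hdisj, himg_card]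

lemma pajor_trivial {𝓖 : Finset (Finset (Fin n))} (hall : ∀ G ∈ 𝓖, G = ∅) :
    𝓖.card ≤ (Sh 𝓖).card := by
  rcases 𝓖.eq_empty_or_nonempty with rfl | ⟨F, hF⟩
  · simp
  · have h1 : 𝓖 = {∅} := by
      apply Subset.antisymm
      · intro G hG; simp [hall G hG]
      · intro G hG; simp only [mem_singleton] at hG; rw [hG, ← hall F hF]; exact hF
    rw [h1]
    have hmem : (∅ : Finset (Fin n)) ∈ Sh ({∅} : Finset (Finset (Fin n))) := by
      apply mem_Sh.2
      intro T hT
      exact ⟨∅, mem_singleton_self _, by simp [subset_empty.1 hT]⟩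
    calc ({∅} : Finset (Finset (Fin n))).card = 1 := card_singleton _
    _ ≤ (Sh ({∅} : Finset (Finset (Fin n)))).card := card_pos.2 ⟨∅, hmem⟩

/-- Pajor's lemma. -/
lemma pajor : ∀ N : ℕ, ∀ 𝓖 : Finset (Finset (Fin n)), m 𝓖 ≤ N → 𝓖.card ≤ (Sh 𝓖).card := by
  intro N
  induction N with
  | zero =>
    intro 𝓖 hm
    apply pajor_trivial
    intro G hG
    have h1 : G.card ≤ m 𝓖 := single_le_sum (fun _ _ => Nat.zero_le _) hG
    rw [← card_eq_zero]
    omega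
  | succ N IH =>
    intro 𝓖 hm
    by_cases hex : ∃ F ∈ 𝓖, ∃ i, i ∈ F
    · obtain ⟨F, hF, i, hiF⟩ := hex
      have h1 := card_le_card (sh_union_subset (𝓕 := 𝓖) i)
      rw [sh_union_card] at h1
      have h2 := IH (F0 𝓖 i ∪ F1 𝓖 i) (by have := m_Fp_lt hF hiF; omega)
      have h3 := IH (F0 𝓖 i ∩ F1 𝓖 i) (by have := m_Fpp_lt hF hiF; omega)
      have h4 := card_split 𝓖 i
      omega
    · push_neg at hex
      apply pajor_trivial
      intro G hG
      rw [eq_empty_iff_forall_notMem]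
      exact hex G hG

end StepBAux

namespace StepBAux
open Finset
variable {n : ℕ}

lemma strong_empty {𝓕 : Finset (Finset (Fin n))} (hne : 𝓕.Nonempty) :
    _root_.StronglyShatters 𝓕 ∅ := by
  obtain ⟨F, hF⟩ := hne
  refine ⟨F, by simp, fun H hH => ?_⟩
  rw [subset_empty.1 hH, empty_union]
  exact hF

lemma extremal_strong : ∀ N : ℕ, ∀ 𝓕 : Finset (Finset (Fin n)), m 𝓕 ≤ N → Extremal 𝓕 →
    ∀ S : Finset (Fin n), _root_.Shatters 𝓕 S → _root_.StronglyShatters 𝓕 S := by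
  intro N
  induction N with
  | zero =>
    intro 𝓕 hm _ S hS
    obtain ⟨F, hF, hFS⟩ := hS S Subset.rfl
    have hF0 : F.card = 0 := by
      have : F.card ≤ m 𝓕 := single_le_sum (fun _ _ => Nat.zero_le _) hF
      omega
    have hS0 : S = ∅ := by
      have := inter_subset_left (s₁ := F) (s₂ := S)
      rw [hFS] at this
      have := card_le_card this
      rw [← card_eq_zero]
      omega
    rw [hS0]
    exact strong_empty ⟨F, hF⟩
  | succ N IH =>
    intro 𝓕 hm hE S hS
    rcases S.eq_empty_or_nonempty with rfl | ⟨i, hiS⟩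
    · obtain ⟨F, hF, _⟩ := hS ∅ (empty_subset _)
      exact strong_empty ⟨F, hF⟩
    -- pick the splitting coordinate i ∈ S
    obtain ⟨F, hF, hFS⟩ := hS {i} (singleton_subset_iff.2 hiS)
    have hiF : i ∈ F := by
      have : i ∈ F ∩ S := hFS ▸ mem_singleton_self i
      exact (mem_inter.1 this).1
    have hsub := sh_union_subset (𝓕 := 𝓕) i
    have hcard := sh_union_card 𝓕 i
    have hsplit := card_split 𝓕 i
    have hpA := pajor (m (F0 𝓕 i ∪ F1 𝓕 i)) _ le_rfl
    have hpB := pajor (m (F0 𝓕 i ∩ F1 𝓕 i)) _ le_rfl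
    have hle := card_le_card hsub
    have hEq : Sh (F0 𝓕 i ∪ F1 𝓕 i) ∪ (Sh (F0 𝓕 i ∩ F1 𝓕 i)).image (insert i) = Sh 𝓕 := by
      apply eq_of_subset_of_card_le hsub
      rw [hcard]
      have := hE
      rw [Extremal] at this
      omega
    have hExtB : Extremal (F0 𝓕 i ∩ F1 𝓕 i) := by
      rw [Extremal]
      rw [Extremal] at hE
      omega
    have hSmem : S ∈ Sh 𝓕 := mem_Sh.2 hS
    rw [← hEq] at hSmem
    rcases mem_union.1 hSmem with hl | hr
    · exact absurd hiS (sh_not_mem Fp_free _ hl)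
    obtain ⟨T, hT, hTS⟩ := mem_image.1 hr
    have hiT : i ∉ T := sh_not_mem Fpp_free _ hT
    have hmB : m (F0 𝓕 i ∩ F1 𝓕 i) ≤ N := by
      have := m_Fpp_lt hF hiF
      omega
    obtain ⟨I, hIc, hI⟩ := IH _ hmB hExtB T (mem_Sh.1 hT)
    have hiI : i ∉ I := by
      have h0 : ∅ ∪ I ∈ F0 𝓕 i ∩ F1 𝓕 i := hI ∅ (empty_subset _)
      rw [empty_union] at h0
      exact Fpp_free _ h0
    refine ⟨I, ?_, ?_⟩
    · intro x hx
      rw [mem_compl, ← hTS, mem_insert]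
      push_neg
      refine ⟨fun hxi => hiI (hxi ▸ hx), fun hxT => ?_⟩
      have := hIc hx
      rw [mem_compl] at this
      exact this hxT
    · intro H hH
      rw [← hTS] at hH
      have hH'T : H.erase i ⊆ T := by
        intro x hx
        rcases mem_insert.1 (hH (mem_of_mem_erase hx)) with rfl | hxT
        · exact absurd rfl (ne_of_mem_erase hx)
        · exact hxT
      have hHpp := hI (H.erase i) hH'T
      by_cases hiH : i ∈ H
      · have h1 := (mem_F1.1 (mem_inter.1 hHpp).2).2
        have heq : insert i (H.erase i ∪ I) = H ∪ I := by
          rw [← insert_union, insert_erase hiH]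
        rwa [heq] at h1
      · have h1 := (mem_F0.1 (mem_inter.1 hHpp).1).1
        rwa [erase_eq_of_notMem hiH] at h1

end StepBAux

namespace StepBAux

lemma symm_cancel {A B C : Finset (Fin n)} (h : A ∆ B = C) : A = C ∆ B := by
  subst h
  ext x
  simp only [Finset.mem_symmDiff]
  tauto

lemma inter_symmDiff (A B S : Finset (Fin n)) : (A ∆ B) ∩ S = (A ∩ S) ∆ (B ∩ S) := by
  ext x
  simp only [Finset.mem_symmDiff, Finset.mem_inter]
  tauto

lemma subset_pair {α β : Fin n} {u : Finset (Fin n)} (h : u ⊆ {α, β}) :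
    u = ∅ ∨ u = {α} ∨ u = {β} ∨ u = {α, β} := by
  have key : ∀ x ∈ u, x = α ∨ x = β := by
    intro x hx
    have := h hx
    simpa using this
  by_cases ha : α ∈ u <;> by_cases hb : β ∈ u
  · right; right; right
    apply Finset.Subset.antisymm h
    intro x hx
    simp only [Finset.mem_insert, Finset.mem_singleton] at hx
    rcases hx with rfl | rfl <;> assumption
  · right; left
    ext x
    simp only [Finset.mem_singleton]
    constructor
    · intro hx
      rcases key x hx with rfl | rfl
      · rfl
      · exact absurd hx hb
    · rintro rfl; exact ha
  · right; right; left
    ext x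
    simp only [Finset.mem_singleton]
    constructor
    · intro hx
      rcases key x hx with rfl | rfl
      · exact absurd hx ha
      · rfl
    · rintro rfl; exact hb
  · left
    ext x
    simp only [Finset.notMem_empty, iff_false]
    intro hx
    rcases key x hx with rfl | rfl
    · exact ha hx
    · exact hb hx

end StepBAux

/-- In Step B the new vertex `V = W ∆ {α, β}` is adjacent in the inclusion graph of
`𝓕 ∪ {V}` only to `P` and `Q`. -/
theorem stepB_neighbors (n : ℕ) (𝓕 : Finset (Finset (Fin n))) (h : Extremal 𝓕)
    (hdim : dimVC 𝓕 ≤ 2) (α β : Fin n) (hne : α ≠ β)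
    (hst : ¬ StronglyShatters 𝓕 ({α, β} : Finset (Fin n)))
    (P W Q : Finset (Fin n)) (hP : P ∈ 𝓕) (hW : W ∈ 𝓕) (hQ : Q ∈ 𝓕)
    (hQW : Q ∆ W = ({α} : Finset (Fin n))) (hPW : P ∆ W = ({β} : Finset (Fin n))) :
    ∀ X ∈ 𝓕, (X ∆ (W ∆ ({α, β} : Finset (Fin n)))).card = 1 → X = P ∨ X = Q := by
  classical
  intro X hX hcard
  set S : Finset (Fin n) := {α, β} with hS
  obtain ⟨γ, hγ⟩ := Finset.card_eq_one.1 hcard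
  have hXeq : X = {γ} ∆ (W ∆ S) := StepBAux.symm_cancel hγ
  have hQeq : Q = {α} ∆ W := StepBAux.symm_cancel hQW
  have hPeq : P = {β} ∆ W := StepBAux.symm_cancel hPW
  by_cases hga : γ = α
  · left
    rw [hXeq, hga, hPeq]
    ext x
    simp only [Finset.mem_symmDiff, Finset.mem_insert, Finset.mem_singleton, hS]
    by_cases h1 : x = α <;> by_cases h2 : x = β <;> simp_all <;> tauto
  · by_cases hgb : γ = β
    · right
      rw [hXeq, hgb, hQeq]
      ext x
      simp only [Finset.mem_symmDiff, Finset.mem_insert, Finset.mem_singleton, hS]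
      by_cases h1 : x = α <;> by_cases h2 : x = β <;> simp_all <;> tauto
    · exfalso
      apply hst
      have hγS : ({γ} : Finset (Fin n)) ∩ S = ∅ := by
        ext x
        simp only [Finset.mem_inter, Finset.mem_singleton, Finset.notMem_empty, iff_false, hS,
          Finset.mem_insert]
        rintro ⟨rfl, rfl | rfl⟩
        · exact hga rfl
        · exact hgb rfl
      have hαS : ({α} : Finset (Fin n)) ∩ S = {α} := by
        apply Finset.inter_eq_left.2
        simp [hS]
      have hβS : ({β} : Finset (Fin n)) ∩ S = {β} := by
        apply Finset.inter_eq_left.2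
        simp [hS]
      have hSS : S ∩ S = S := Finset.inter_self S
      set t : Finset (Fin n) := W ∩ S with ht
      have traceQ : Q ∩ S = {α} ∆ t := by
        rw [hQeq, StepBAux.inter_symmDiff, hαS]
      have traceP : P ∩ S = {β} ∆ t := by
        rw [hPeq, StepBAux.inter_symmDiff, hβS]
      have traceX : X ∩ S = t ∆ S := by
        rw [hXeq, StepBAux.inter_symmDiff, StepBAux.inter_symmDiff, hγS, hSS, ← ht]
        ext x
        simp only [Finset.mem_symmDiff, Finset.notMem_empty]
        tauto
      have hshat : Shatters 𝓕 S := by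
        intro T hT
        have htS : t ⊆ S := Finset.inter_subset_right
        have huS : T ∆ t ⊆ S := by
          intro x hx
          rcases (Finset.mem_symmDiff.1 hx) with ⟨h1, _⟩ | ⟨h1, _⟩
          · exact hT h1
          · exact htS h1
        have hTu : T = (T ∆ t) ∆ t := StepBAux.symm_cancel rfl
        rcases StepBAux.subset_pair (α := α) (β := β) huS with hu | hu | hu | hu
        · refine ⟨W, hW, ?_⟩
          rw [← ht, hTu, hu]
          ext x
          simp only [Finset.mem_symmDiff, Finset.notMem_empty]
          tauto
        · exact ⟨Q, hQ, by rw [traceQ, hTu, hu]⟩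
        · exact ⟨P, hP, by rw [traceP, hTu, hu]⟩
        · refine ⟨X, hX, ?_⟩
          rw [traceX, hTu, hu, ← hS, symmDiff_comm]
      exact StepBAux.extremal_strong (StepBAux.m 𝓕) 𝓕 le_rfl h S hshat
end
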